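/- For every finite V ⊂ ℤ², every β > 0, all boundary conditions φ ≤ φ' (pointwise on ∂_o V), and all floor/ceiling pairs with a_v ≤ a_v' and b_v ≤ b_v' for all v ∈ V, the map λ ↦ Z^{a,b,φ}_{λ,V} / Z^{a',b',φ'}_{λ,V} is nondecreasing in λ, i.e., its derivative with respect to λ is nonnegative. -/

import Mathlib

open scoped BigOperators
open Filter

noncomputable section

attribute [local instance] Classical.propDecidable

/-! ### Basic geometry of the square lattice -/

/-- Sites of the square lattice `ℤ²`. -/
abbrev Site := ℤ × ℤ

/-- The four unit directions. -/
def dirs : Finset Site := {(1, 0), (-1, 0), (0, 1), (0, -1)}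

/-- The box `Λ_n = ⟦-n/2, n/2⟧² ∩ ℤ²`. -/
def box (n : ℕ) : Finset Site :=
  Finset.Icc (-((n : ℤ) / 2)) ((n : ℤ) / 2) ×ˢ Finset.Icc (-((n : ℤ) / 2)) ((n : ℤ) / 2)

/-- SOS gradient energy of a height function on a domain `V`: each nearest-neighbour
edge with at least one endpoint in `V` contributes the absolute height gradient
(the directed sum below counts internal edges twice, whence the factor `1/2`). -/
def sosEnergy (V : Finset Site) (ψ : Site → ℤ) : ℝ :=
  ∑ v ∈ V, ∑ d ∈ dirs,
    (if v + d ∈ V then (1 : ℝ) / 2 else 1) * |(ψ v : ℝ) - (ψ (v + d) : ℝ)|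

/-- The bulk field term `Σ_{v ∈ V} ψ_v`. -/
def sosField (V : Finset Site) (ψ : Site → ℤ) : ℝ := ∑ v ∈ V, (ψ v : ℝ)

/-- The SOS weight `exp(-β Σ|∇ψ| - λ Σ ψ)`. -/
def sosWt (β lam : ℝ) (V : Finset Site) (ψ : Site → ℤ) : ℝ :=
  Real.exp (-(β * sosEnergy V ψ + lam * sosField V ψ))

/-- The inner boundary `∂_i V`. -/
def innerBdry (V : Finset Site) : Finset Site :=
  V.filter fun v => ∃ d ∈ dirs, v + d ∉ V

/-- The interior `V̊ = V ∖ ∂_i V`. -/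
def interiorSites (V : Finset Site) : Finset Site := V \ innerBdry V

/-- The number of edges `|∂_e V|` between `V` and its complement. -/
def edgeBdryCard (V : Finset Site) : ℕ :=
  ∑ v ∈ V, (dirs.filter fun d => v + d ∉ V).card

/-- Nearest-neighbour adjacency. -/
def adjS (u v : Site) : Prop := v - u ∈ dirs

/-- A set of sites is connected (as a subgraph of `ℤ²`). -/
def connectedIn (S : Set Site) : Prop :=
  ∀ x ∈ S, ∀ y ∈ S,
    Relation.ReflTransGen (fun a b => adjS a b ∧ a ∈ S ∧ b ∈ S) x y

/-- A finite set of sites is simply connected: it is connected and its complement is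
connected. -/
def SimplyConn (V : Finset Site) : Prop :=
  connectedIn (↑V : Set Site) ∧ connectedIn ((↑V : Set Site)ᶜ)

/-! ### SOS measures with a boundary signing -/

/-- A boundary signing value: `+`, `-`, `∅` or free. -/
inductive BSign | plus | minus | zero | free

/-- The constraint imposed at an inner-boundary site by a signing, for boundary height
`h`: `+` forces `≥ h`, `-` forces `≤ h`, `∅` forces `= h`, and `f` forces nothing. -/
def BSign.ok : BSign → ℤ → ℤ → Prop
  | .plus, h, t => h ≤ t
  | .minus, h, t => t ≤ h
  | .zero, h, t => t = h
  | .free, _, _ => True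

/-- Height functions with boundary condition identically `h` outside `V`, floor `0`
on `V` (and no ceiling), compatible with the boundary signing `η` along `∂_i V`. -/
def signedConfigs (V : Finset Site) (η : Site → BSign) (h : ℤ) : Set (Site → ℤ) :=
  {ψ | (∀ x, x ∉ V → ψ x = h) ∧ (∀ v ∈ V, 0 ≤ ψ v) ∧
       ∀ v ∈ innerBdry V, BSign.ok (η v) h (ψ v)}

/-- The partition function `Z_{η,h,V}`. -/
def Zsos (β lam : ℝ) (η : Site → BSign) (h : ℤ) (V : Finset Site) : ℝ :=
  ∑' ψ : Site → ℤ, Set.indicator (signedConfigs V η h) (sosWt β lam V) ψ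

/-- Probability of an event under the SOS measure `μ_{η,h,V}`. -/
def Psos (β lam : ℝ) (η : Site → BSign) (h : ℤ) (V : Finset Site)
    (E : Set (Site → ℤ)) : ℝ :=
  (∑' ψ : Site → ℤ, Set.indicator (signedConfigs V η h ∩ E) (sosWt β lam V) ψ) /
    Zsos β lam η h V

/-! ### Contours -/

/-- A (signed geometric) contour, encoded by the finite set of sites it encloses and its
sign (up/down); the contour itself is the dual circuit `(∂_e Int)^*`. -/
structure Contour where
  int : Finset Site
  up : Bool

/-- The length `|γ|` of a contour: the number of boundary edges of its interior. -/
def Contour.len (γ : Contour) : ℕ := edgeBdryCard γ.int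

/-- A valid contour encloses a nonempty simply-connected set of sites. -/
def Contour.valid (γ : Contour) : Prop :=
  γ.int.Nonempty ∧ connectedIn (↑γ.int : Set Site) ∧ connectedIn ((↑γ.int : Set Site)ᶜ)

/-- The constant boundary signing. -/
def constSign (s : BSign) : Site → BSign := fun _ => s

/-- The `h`-renormalized weight `W^rn_h(γ)`. -/
def Wrn (β lam : ℝ) (h : ℤ) (γ : Contour) : ℝ :=
  if γ.up then
    Real.exp (-β * (γ.len : ℝ)) *
      (Zsos β lam (constSign .plus) (h + 1) γ.int / Zsos β lam (constSign .plus) h γ.int)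
  else
    Real.exp (-β * (γ.len : ℝ)) *
      (Zsos β lam (constSign .minus) (h - 1) γ.int / Zsos β lam (constSign .minus) h γ.int)

/-- The `h`-truncated weight `W^tr_h(γ) = min{W^rn_h(γ), e^{-(β-5)|γ|}}`. -/
def Wtr (β lam : ℝ) (h : ℤ) (γ : Contour) : ℝ :=
  min (Wrn β lam h γ) (Real.exp (-(β - 5) * (γ.len : ℝ)))

/-- The elementary diameter bound `min{λ⁻¹, e^{3β(h+1)}}`. -/
def elemBound (β lam : ℝ) (h : ℤ) : ℝ := min (1 / lam) (Real.exp (3 * β * ((h : ℝ) + 1)))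

/-- A set of sites is `h`-elementary small: the enclosing contour (whose ℓ∞-diameter is
one more than that of the enclosed set) has diameter at most `min{λ⁻¹, e^{3β(h+1)}}`. -/
def elemSet (β lam : ℝ) (h : ℤ) (S : Set Site) : Prop :=
  ∀ x ∈ S, ∀ y ∈ S,
    ((max |x.1 - y.1| |x.2 - y.2| : ℤ) : ℝ) + 1 ≤ elemBound β lam h

/-- A contour is `h`-elementary if `diam(γ) ≤ min{λ⁻¹, e^{3β(h+1)}}`. -/
def IsElem (β lam : ℝ) (h : ℤ) (γ : Contour) : Prop := elemSet β lam h (↑γ.int : Set Site)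

/-- Two finite sets of sites share a (primal, equivalently dual) boundary edge. -/
def shareEdge (A B : Finset Site) : Prop :=
  ∃ v, ∃ d ∈ dirs, (v ∈ A ∧ v + d ∉ A) ∧ ((v ∈ B ∧ v + d ∉ B) ∨ (v + d ∈ B ∧ v ∉ B))

/-- Compatibility of a pair of signed contours: they may not cross, and if they overlap
on an edge their signs agree when nested and differ when mutually external. -/
def compatPair (γ γ' : Contour) : Prop :=
  (γ.int ⊆ γ'.int ∨ γ'.int ⊆ γ.int ∨ Disjoint γ.int γ'.int) ∧
  (shareEdge γ.int γ'.int →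
    ((γ.int ⊆ γ'.int ∨ γ'.int ⊆ γ.int) → γ.up = γ'.up) ∧
    (Disjoint γ.int γ'.int → γ.up ≠ γ'.up))

/-- Admissible renormalized families of signed contours in `U`, compatible with the
boundary signing `η` at reference height `h` (no floor constraint except that no
down-contours are allowed when `h = 0`). -/
def famOK (η : Site → BSign) (h : ℤ) (U : Finset Site) (Γ : Multiset Contour) : Prop :=
  (∀ γ ∈ Γ, Contour.valid γ ∧ γ.int ⊆ U) ∧
  (∀ γ ∈ Γ, ∀ γ' ∈ Γ, compatPair γ γ') ∧
  (∀ v ∈ innerBdry U, ∀ γ ∈ Γ, v ∈ γ.int →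
    (γ.up = true → η v ≠ BSign.minus ∧ η v ≠ BSign.zero) ∧
    (γ.up = false → η v ≠ BSign.plus ∧ η v ≠ BSign.zero)) ∧
  (h = 0 → ∀ γ ∈ Γ, γ.up = true)

/-- The product of weights of a family of contours. -/
def prodW (w : Contour → ℝ) (Γ : Multiset Contour) : ℝ := (Γ.map w).prod

/-- The truncated partition function `Z^tr_{η,h,U}`. -/
def Ztr (β lam : ℝ) (η : Site → BSign) (h : ℤ) (U : Finset Site) : ℝ :=
  Real.exp (-lam * (h : ℝ) * (U.card : ℝ)) *
    ∑' Γ : Multiset Contour, Set.indicator {Γ | famOK η h U Γ} (prodW (Wtr β lam h)) Γ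

/-- The renormalized partition function `Z^rn_{η,h,U}`. -/
def Zrn (β lam : ℝ) (η : Site → BSign) (h : ℤ) (U : Finset Site) : ℝ :=
  Real.exp (-lam * (h : ℝ) * (U.card : ℝ)) *
    ∑' Γ : Multiset Contour, Set.indicator {Γ | famOK η h U Γ} (prodW (Wrn β lam h)) Γ

/-- The renormalized elementary partition function `Z^{rn.el}_{η,h,U}`. -/
def Zrnel (β lam : ℝ) (η : Site → BSign) (h : ℤ) (U : Finset Site) : ℝ :=
  Real.exp (-lam * (h : ℝ) * (U.card : ℝ)) *
    ∑' Γ : Multiset Contour,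
      Set.indicator {Γ | famOK η h U Γ ∧ ∀ γ ∈ Γ, IsElem β lam h γ}
        (prodW (Wrn β lam h)) Γ

/-! ### Elementary restriction of the SOS measure -/

/-- `*`-adjacency (adjacency allowing diagonal steps). -/
def starAdj (u v : Site) : Prop := u ≠ v ∧ |u.1 - v.1| ≤ 1 ∧ |u.2 - v.2| ≤ 1

/-- The `*`-connected component of `x` within `S`. -/
def compStar (S : Set Site) (x : Site) : Set Site :=
  {y | Relation.ReflTransGen (fun a b => starAdj a b ∧ a ∈ S ∧ b ∈ S) x y}

/-- The fill of a set of sites: the set together with all sites whose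
complement-component is finite. -/
def fill (C : Set Site) : Set Site :=
  C ∪ {x | {y | Relation.ReflTransGen (fun a b => adjS a b ∧ a ∉ C ∧ b ∉ C) x y}.Finite}

/-- All outermost contours of the configuration `ψ` (with boundary height `h` on `V`)
are `h`-elementary: every filled deviation component is elementary-small. -/
def allOuterElem (β lam : ℝ) (h : ℤ) (V : Finset Site) (ψ : Site → ℤ) : Prop :=
  ∀ v ∈ V, ψ v ≠ h → elemSet β lam h (fill (compStar {u : Site | u ∈ V ∧ ψ u ≠ h} v))

/-- The elementary partition function `Z^el_{η,h,V}`: the contribution to `Z_{η,h,V}`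
of configurations all of whose outermost contours are `h`-elementary. -/
def Zel (β lam : ℝ) (η : Site → BSign) (h : ℤ) (V : Finset Site) : ℝ :=
  ∑' ψ : Site → ℤ,
    Set.indicator (signedConfigs V η h ∩ {ψ | allOuterElem β lam h V ψ})
      (sosWt β lam V) ψ

/-! ### Truncated free energies and the critical sequence -/

/-- `ftr h` is the truncated free energy `f^tr_h(λ)`: the infinite-volume limit of
`|Λ_n|⁻¹ log Z^tr_{η,h,Λ_n}`, for every boundary signing. -/
def FTRlimit (β : ℝ) (ftr : ℕ → ℝ → ℝ) : Prop :=
  ∀ h : ℕ, ∀ lam : ℝ, 0 < lam → lam ≤ 1 → ∀ η : Site → BSign,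
    Tendsto (fun n => Real.log (Ztr β lam η (h : ℤ) (box n)) / ((box n).card : ℝ))
      atTop (nhds (ftr h lam))

/-- `lamc` is the strictly decreasing sequence `(λ_c^{(k)})_{k≥0}` of critical points,
tending to `0`, at which the truncated free energies `ftr` exchange maximizer. -/
def CritSeq (ftr : ℕ → ℝ → ℝ) (lamc : ℕ → ℝ) : Prop :=
  StrictAnti lamc ∧ (∀ i, 0 < lamc i) ∧ Tendsto lamc atTop (nhds 0) ∧
  (∀ i : ℕ, ∀ lam : ℝ, 0 < lam → lam ≤ 1 → lamc i < lam →
    (i = 0 ∨ lam < lamc (i - 1)) → ∀ j : ℕ, j ≠ i → ftr j lam < ftr i lam) ∧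
  (∀ i : ℕ, ftr (i + 1) (lamc i) = ftr i (lamc i) ∧
    ∀ j : ℕ, j ≠ i → j ≠ i + 1 → ftr j (lamc i) < ftr i (lamc i))

/-- `d(x) = min_k |λ_c^{(k)} - x|`. -/
def dmin (lamc : ℕ → ℝ) (x : ℝ) : ℝ := ⨅ k : ℕ, |lamc k - x|

/-- `d⁺(x) = min{λ_c^{(k)} - x : λ_c^{(k)} > x}`. -/
def dplus (lamc : ℕ → ℝ) (x : ℝ) : ℝ := sInf {y : ℝ | ∃ k, x < lamc k ∧ y = lamc k - x}

/-! ### SOS measures with general boundary conditions (floor 0, no ceiling) -/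

/-- Height functions equal to the boundary condition `φ` off `V` and nonnegative on `V`. -/
def bcConfigs (V : Finset Site) (φ : Site → ℤ) : Set (Site → ℤ) :=
  {ψ | (∀ x, x ∉ V → ψ x = φ x) ∧ ∀ v ∈ V, 0 ≤ ψ v}

/-- The partition function with boundary condition `φ`. -/
def Zbc (β lam : ℝ) (V : Finset Site) (φ : Site → ℤ) : ℝ :=
  ∑' ψ : Site → ℤ, Set.indicator (bcConfigs V φ) (sosWt β lam V) ψ

/-- Probability of an event under the SOS measure `μ_{φ,V}` (floor 0, no ceiling). -/
def Pbc (β lam : ℝ) (V : Finset Site) (φ : Site → ℤ) (E : Set (Site → ℤ)) : ℝ :=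
  (∑' ψ : Site → ℤ, Set.indicator (bcConfigs V φ ∩ E) (sosWt β lam V) ψ) /
    Zbc β lam V φ

/-! ### Glauber dynamics on the box with a ceiling -/

/-- A configuration on `Λ_n` with floor `0` and ceiling `ℓ`. -/
abbrev Cfg (n ℓ : ℕ) := {x : Site // x ∈ box n} → Fin (ℓ + 1)

/-- Extension of a configuration by the zero boundary condition. -/
def cExt {n ℓ : ℕ} (ψ : Cfg n ℓ) : Site → ℤ :=
  fun x => if h : x ∈ box n then ((ψ ⟨x, h⟩ : ℕ) : ℤ) else 0

/-- The weight of a configuration (zero boundary conditions). -/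
def cWt (n ℓ : ℕ) (β lam : ℝ) (ψ : Cfg n ℓ) : ℝ := sosWt β lam (box n) (cExt ψ)

/-- The partition function on `Λ_n` with ceiling `ℓ` and zero boundary conditions. -/
def cZ (n ℓ : ℕ) (β lam : ℝ) : ℝ := ∑ ψ : Cfg n ℓ, cWt n ℓ β lam ψ

/-- The SOS probability measure `μ_{n,λ}` (ceiling `ℓ`, zero boundary conditions). -/
def cPi (n ℓ : ℕ) (β lam : ℝ) (ψ : Cfg n ℓ) : ℝ := cWt n ℓ β lam ψ / cZ n ℓ β lam

/-- Probability of an event under `μ_{n,λ}`. -/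
def cProb (n ℓ : ℕ) (β lam : ℝ) (E : Set (Cfg n ℓ)) : ℝ :=
  (∑ ψ : Cfg n ℓ, if ψ ∈ E then cWt n ℓ β lam ψ else 0) / cZ n ℓ β lam

/-- The Glauber (heat-bath) jump rate from `ψ` to `ψ' ≠ ψ`: nonzero only if they differ
at a single site `v` by exactly one, in which case `v`'s height is resampled among
`{ψ_v - 1, ψ_v, ψ_v + 1}` (truncated at the floor and the ceiling) according to the
conditional probabilities given the other heights. -/
def glRate (n ℓ : ℕ) (β lam : ℝ) (ψ ψ' : Cfg n ℓ) : ℝ :=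
  if ψ = ψ' then 0
  else
    ∑ v : {x : Site // x ∈ box n},
      if (∀ u, u ≠ v → ψ u = ψ' u) ∧ (((ψ' v : ℕ) : ℤ) - ((ψ v : ℕ) : ℤ)) ^ 2 = 1 then
        cWt n ℓ β lam ψ' /
          ∑ t : Fin (ℓ + 1),
            (if (((t : ℕ) : ℤ) - ((ψ v : ℕ) : ℤ)) ^ 2 ≤ 1 then
              cWt n ℓ β lam (Function.update ψ v t) else 0)
      else 0

/-- Mean of an observable under `μ_{n,λ}`. -/
def cMean (n ℓ : ℕ) (β lam : ℝ) (f : Cfg n ℓ → ℝ) : ℝ :=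
  ∑ ψ : Cfg n ℓ, cPi n ℓ β lam ψ * f ψ

/-- Variance of an observable under `μ_{n,λ}`. -/
def cVar (n ℓ : ℕ) (β lam : ℝ) (f : Cfg n ℓ → ℝ) : ℝ :=
  ∑ ψ : Cfg n ℓ, cPi n ℓ β lam ψ * (f ψ - cMean n ℓ β lam f) ^ 2

/-- The Dirichlet form of the Glauber dynamics. -/
def cDirichlet (n ℓ : ℕ) (β lam : ℝ) (f : Cfg n ℓ → ℝ) : ℝ :=
  (1 / 2) * ∑ ψ : Cfg n ℓ, ∑ ψ' : Cfg n ℓ,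
    cPi n ℓ β lam ψ * glRate n ℓ β lam ψ ψ' * (f ψ' - f ψ) ^ 2

/-- The spectral gap `gap_{n,λ}` of the generator of the Glauber dynamics (ceiling `ℓ`):
by reversibility, the smallest nonzero eigenvalue of minus the generator equals the
infimum of the Rayleigh quotients `E(f,f)/Var(f)`. -/
def specGap (n ℓ : ℕ) (β lam : ℝ) : ℝ :=
  sInf {r : ℝ | ∃ f : Cfg n ℓ → ℝ,
    cVar n ℓ β lam f ≠ 0 ∧ r = cDirichlet n ℓ β lam f / cVar n ℓ β lam f}

end

noncomputable section

/-- Height functions on `ℤ²` equal to the boundary condition `φ` off `V` and respecting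
the floors `a` and the (possibly infinite) ceilings `b` on `V`. -/
def gConfigs (V : Finset Site) (a : Site → ℤ) (b : Site → WithTop ℤ) (φ : Site → ℤ) :
    Set (Site → ℤ) :=
  {ψ | (∀ x, x ∉ V → ψ x = φ x) ∧ ∀ v ∈ V, a v ≤ ψ v ∧ (ψ v : WithTop ℤ) ≤ b v}

/-- The partition function `Z^{a,b,φ}_{λ,V}`. -/
def gZ (β lam : ℝ) (V : Finset Site) (a : Site → ℤ) (b : Site → WithTop ℤ)
    (φ : Site → ℤ) : ℝ :=
  ∑' ψ : Site → ℤ, Set.indicator (gConfigs V a b φ) (sosWt β lam V) ψ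

/-- The expectation of `f` under the SOS measure `μ^{a,b,φ}_{λ,V}`. -/
def gExp (β lam : ℝ) (V : Finset Site) (a : Site → ℤ) (b : Site → WithTop ℤ)
    (φ : Site → ℤ) (f : (Site → ℤ) → ℝ) : ℝ :=
  (∑' ψ : Site → ℤ, Set.indicator (gConfigs V a b φ) (fun ψ => sosWt β lam V ψ * f ψ) ψ) /
    gZ β lam V a b φ

end

noncomputable section Statement6Aux
open Function

lemma abs_min_max (a b c d : ℝ) :
    |min a b - min c d| + |max a b - max c d| ≤ |a - c| + |b - d| := by
  rcases le_total a b with hab | hab <;> rcases le_total c d with hcd | hcd <;>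
    simp only [min_eq_left, min_eq_right, max_eq_left, max_eq_right, hab, hcd,
      min_def, max_def] <;>
    rcases abs_cases (a - c) with ⟨h1, h1'⟩ | ⟨h1, h1'⟩ <;>
    rcases abs_cases (b - d) with ⟨h2, h2'⟩ | ⟨h2, h2'⟩ <;>
    rcases abs_cases (a - d) with ⟨h3, h3'⟩ | ⟨h3, h3'⟩ <;>
    rcases abs_cases (b - c) with ⟨h4, h4'⟩ | ⟨h4, h4'⟩ <;>
    linarith

lemma neg_mem_dirs {d : Site} (hd : d ∈ dirs) : -d ∈ dirs := by
  fin_cases hd <;> decide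

lemma sosWt_pos (β lam : ℝ) (V : Finset Site) (ψ : Site → ℤ) : 0 < sosWt β lam V ψ :=
  Real.exp_pos _

lemma sosEnergy_nonneg (V : Finset Site) (ψ : Site → ℤ) : 0 ≤ sosEnergy V ψ := by
  refine Finset.sum_nonneg fun v _ => Finset.sum_nonneg fun d _ => ?_
  have : (0:ℝ) ≤ |(ψ v : ℝ) - (ψ (v + d) : ℝ)| := abs_nonneg _
  split_ifs <;> nlinarith

end Statement6Aux
/-- Extension of a height configuration on `V` by the boundary condition `φ`. -/
def extC (V : Finset Site) (φ : Site → ℤ) (x : {v : Site // v ∈ V} → ℤ) : Site → ℤ :=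
  fun s => if h : s ∈ V then x ⟨s, h⟩ else φ s

/-- The constraint set on the finite-dimensional lattice. -/
def Cset (V : Finset Site) (a : Site → ℤ) (b : Site → WithTop ℤ) :
    Set ({v : Site // v ∈ V} → ℤ) :=
  {x | ∀ v, a v.1 ≤ x v ∧ (x v : WithTop ℤ) ≤ b v.1}

lemma extC_injective (V : Finset Site) (φ : Site → ℤ) : Function.Injective (extC V φ) := by
  intro x y h
  funext v
  have := congrFun h v.1
  simpa [extC, v.2] using this

lemma extC_mem_iff (V : Finset Site) (a : Site → ℤ) (b : Site → WithTop ℤ) (φ : Site → ℤ)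
    (x : {v : Site // v ∈ V} → ℤ) :
    extC V φ x ∈ gConfigs V a b φ ↔ x ∈ Cset V a b := by
  constructor
  · rintro ⟨-, h2⟩ v
    have := h2 v.1 v.2
    simpa [extC, v.2] using this
  · intro hx
    refine ⟨fun s hs => by simp [extC, hs], fun v hv => ?_⟩
    have := hx ⟨v, hv⟩
    simpa [extC, hv] using this

lemma gZ_eq (β lam : ℝ) (V : Finset Site) (a : Site → ℤ) (b : Site → WithTop ℤ)
    (φ : Site → ℤ) :
    gZ β lam V a b φ =
      ∑' x : {v : Site // v ∈ V} → ℤ,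
        Set.indicator (Cset V a b) (fun x => sosWt β lam V (extC V φ x)) x := by
  rw [gZ]
  rw [← (extC_injective V φ).tsum_eq (f := Set.indicator (gConfigs V a b φ) (sosWt β lam V))]
  · refine tsum_congr fun x => ?_
    by_cases hx : x ∈ Cset V a b
    · rw [Set.indicator_of_mem hx, Set.indicator_of_mem ((extC_mem_iff V a b φ x).2 hx)]
    · rw [Set.indicator_of_notMem hx,
        Set.indicator_of_notMem (fun h => hx ((extC_mem_iff V a b φ x).1 h))]
  · intro ψ hψ
    have hmem : ψ ∈ gConfigs V a b φ := by
      by_contra h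
      exact hψ (Set.indicator_of_notMem h _)
    refine ⟨fun v => ψ v.1, ?_⟩
    funext s
    by_cases hs : s ∈ V
    · simp [extC, hs]
    · simp [extC, hs, hmem.1 s hs]
section MinMax

variable {V : Finset Site} {a a' : Site → ℤ} {b b' : Site → WithTop ℤ} {φ φ' : Site → ℤ}

/-- On all sites relevant to the energy, `extC V φ (x ⊓ y)` is the pointwise min. -/
lemma extC_inf_eq (hφ : ∀ w, w ∉ V → (∃ d ∈ dirs, w + d ∈ V) → φ w ≤ φ' w)
    (x y : {v : Site // v ∈ V} → ℤ) (s : Site)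
    (hs : s ∈ V ∨ (∃ d ∈ dirs, s + d ∈ V)) :
    extC V φ (x ⊓ y) s = min (extC V φ x s) (extC V φ' y s) := by
  by_cases h : s ∈ V
  · simp [extC, h]
  · rcases hs with h' | h'
    · exact absurd h' h
    · simp [extC, h, min_eq_left (hφ s h h')]

lemma extC_sup_eq (hφ : ∀ w, w ∉ V → (∃ d ∈ dirs, w + d ∈ V) → φ w ≤ φ' w)
    (x y : {v : Site // v ∈ V} → ℤ) (s : Site)
    (hs : s ∈ V ∨ (∃ d ∈ dirs, s + d ∈ V)) :
    extC V φ' (x ⊔ y) s = max (extC V φ x s) (extC V φ' y s) := by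
  by_cases h : s ∈ V
  · simp [extC, h]
  · rcases hs with h' | h'
    · exact absurd h' h
    · simp [extC, h, max_eq_right (hφ s h h')]

lemma energy_min_max (hφ : ∀ w, w ∉ V → (∃ d ∈ dirs, w + d ∈ V) → φ w ≤ φ' w)
    (x y : {v : Site // v ∈ V} → ℤ) :
    sosEnergy V (extC V φ (x ⊓ y)) + sosEnergy V (extC V φ' (x ⊔ y)) ≤
      sosEnergy V (extC V φ x) + sosEnergy V (extC V φ' y) := by
  rw [sosEnergy, sosEnergy, sosEnergy, sosEnergy, ← Finset.sum_add_distrib,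
    ← Finset.sum_add_distrib]
  refine Finset.sum_le_sum fun v hv => ?_
  rw [← Finset.sum_add_distrib, ← Finset.sum_add_distrib]
  refine Finset.sum_le_sum fun d hd => ?_
  have hmemv : v ∈ V ∨ (∃ d' ∈ dirs, v + d' ∈ V) := Or.inl hv
  have hmemvd : v + d ∈ V ∨ (∃ d' ∈ dirs, (v + d) + d' ∈ V) := by
    by_cases h : v + d ∈ V
    · exact Or.inl h
    · exact Or.inr ⟨-d, neg_mem_dirs hd, by simpa using hv⟩
  have e1 := extC_inf_eq hφ x y v hmemv
  have e2 := extC_inf_eq hφ x y (v + d) hmemvd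
  have e3 := extC_sup_eq hφ x y v hmemv
  have e4 := extC_sup_eq hφ x y (v + d) hmemvd
  rw [e1, e2, e3, e4]
  have key := abs_min_max (extC V φ x v : ℝ) (extC V φ' y v : ℝ)
    (extC V φ x (v + d) : ℝ) (extC V φ' y (v + d) : ℝ)
  push_cast
  rcases le_or_gt ((1:ℝ)/2) 1 with - | -
  · split_ifs <;> nlinarith [abs_nonneg ((extC V φ x v : ℝ) - (extC V φ x (v+d) : ℝ))]
  · split_ifs <;> nlinarith

lemma field_min_add_max (x y : {v : Site // v ∈ V} → ℤ) :
    sosField V (extC V φ (x ⊓ y)) + sosField V (extC V φ' (x ⊔ y)) =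
      sosField V (extC V φ x) + sosField V (extC V φ' y) := by
  rw [sosField, sosField, sosField, sosField, ← Finset.sum_add_distrib,
    ← Finset.sum_add_distrib]
  refine Finset.sum_congr rfl fun v hv => ?_
  simp only [extC, dif_pos hv]
  have : min (x ⟨v, hv⟩) (y ⟨v, hv⟩) + max (x ⟨v, hv⟩) (y ⟨v, hv⟩)
      = x ⟨v, hv⟩ + y ⟨v, hv⟩ := min_add_max _ _
  push_cast
  have h1 : (x ⊓ y) ⟨v, hv⟩ = min (x ⟨v, hv⟩) (y ⟨v, hv⟩) := rfl
  have h2 : (x ⊔ y) ⟨v, hv⟩ = max (x ⟨v, hv⟩) (y ⟨v, hv⟩) := rfl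
  rw [h1, h2]
  push_cast
  have := min_add_max ((x ⟨v, hv⟩ : ℝ)) ((y ⟨v, hv⟩ : ℝ))
  push_cast at this
  linarith

lemma field_min_le (x y : {v : Site // v ∈ V} → ℤ) :
    sosField V (extC V φ (x ⊓ y)) ≤ sosField V (extC V φ' y) := by
  refine Finset.sum_le_sum fun v hv => ?_
  simp only [extC, dif_pos hv]
  have h1 : (x ⊓ y) ⟨v, hv⟩ = min (x ⟨v, hv⟩) (y ⟨v, hv⟩) := rfl
  rw [h1]
  exact_mod_cast min_le_right _ _

end MinMax
section ADpoint

variable {V : Finset Site} {a a' : Site → ℤ} {b b' : Site → WithTop ℤ} {φ φ' : Site → ℤ}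

lemma inf_mem_Cset (ha : ∀ v ∈ V, a v ≤ a' v) {x y : {v : Site // v ∈ V} → ℤ}
    (hx : x ∈ Cset V a b) (hy : y ∈ Cset V a' b') : x ⊓ y ∈ Cset V a b := by
  intro v
  refine ⟨le_min (hx v).1 (le_trans (ha v.1 v.2) (hy v).1), ?_⟩
  have h1 : (x ⊓ y) v = min (x v) (y v) := rfl
  rw [h1]
  exact le_trans (by exact_mod_cast (min_le_left (x v) (y v) : (min (x v) (y v) : ℤ) ≤ x v))
    (hx v).2

lemma sup_mem_Cset (hb : ∀ v ∈ V, b v ≤ b' v) {x y : {v : Site // v ∈ V} → ℤ}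
    (hx : x ∈ Cset V a b) (hy : y ∈ Cset V a' b') : x ⊔ y ∈ Cset V a' b' := by
  intro v
  have h1 : (x ⊔ y) v = max (x v) (y v) := rfl
  constructor
  · rw [h1]; exact le_trans (hy v).1 (le_max_right _ _)
  · rw [h1]
    have hxb : (x v : WithTop ℤ) ≤ b' v.1 := le_trans (hx v).2 (hb v.1 v.2)
    have : ((max (x v) (y v) : ℤ) : WithTop ℤ) = max ((x v : WithTop ℤ)) ((y v : WithTop ℤ)) := by
      rcases le_total (x v) (y v) with h | h
      · rw [max_eq_right h, max_eq_right (by exact_mod_cast h : (x v : WithTop ℤ) ≤ (y v : WithTop ℤ))]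
      · rw [max_eq_left h, max_eq_left (by exact_mod_cast h : (y v : WithTop ℤ) ≤ (x v : WithTop ℤ))]
    rw [this]
    exact max_le hxb (hy v).2

lemma ADpointwise (β : ℝ) (hβ : 0 < β) {lam1 lam2 : ℝ} (h1 : 0 ≤ lam1) (h12 : lam1 ≤ lam2)
    (ha : ∀ v ∈ V, a v ≤ a' v) (hb : ∀ v ∈ V, b v ≤ b' v)
    (hφ : ∀ w, w ∉ V → (∃ d ∈ dirs, w + d ∈ V) → φ w ≤ φ' w)
    (x y : {v : Site // v ∈ V} → ℤ) :
    Set.indicator (Cset V a b) (fun x => sosWt β lam1 V (extC V φ x)) x *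
      Set.indicator (Cset V a' b') (fun y => sosWt β lam2 V (extC V φ' y)) y ≤
    Set.indicator (Cset V a b) (fun x => sosWt β lam2 V (extC V φ x)) (x ⊓ y) *
      Set.indicator (Cset V a' b') (fun y => sosWt β lam1 V (extC V φ' y)) (x ⊔ y) := by
  by_cases hx : x ∈ Cset V a b
  · by_cases hy : y ∈ Cset V a' b'
    · rw [Set.indicator_of_mem hx, Set.indicator_of_mem hy,
        Set.indicator_of_mem (inf_mem_Cset ha hx hy),
        Set.indicator_of_mem (sup_mem_Cset hb hx hy)]
      rw [sosWt, sosWt, sosWt, sosWt, ← Real.exp_add, ← Real.exp_add]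
      apply Real.exp_le_exp.2
      have hE := energy_min_max hφ x y
      have hFeq := field_min_add_max (φ := φ) (φ' := φ') x y
      have hFle := field_min_le (φ := φ) (φ' := φ') x y
      nlinarith [mul_le_mul_of_nonneg_left hFle (sub_nonneg.2 h12),
        mul_le_mul_of_nonneg_left hE hβ.le]
    · rw [Set.indicator_of_notMem hy]
      have := Set.indicator_nonneg (s := Cset V a b)
        (f := fun x => sosWt β lam2 V (extC V φ x)) (fun z _ => (sosWt_pos _ _ _ _).le) (x ⊓ y)
      have := Set.indicator_nonneg (s := Cset V a' b')
        (f := fun y => sosWt β lam1 V (extC V φ' y)) (fun z _ => (sosWt_pos _ _ _ _).le) (x ⊔ y)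
      nlinarith
  · rw [Set.indicator_of_notMem hx]
    have := Set.indicator_nonneg (s := Cset V a b)
      (f := fun x => sosWt β lam2 V (extC V φ x)) (fun z _ => (sosWt_pos _ _ _ _).le) (x ⊓ y)
    have := Set.indicator_nonneg (s := Cset V a' b')
      (f := fun y => sosWt β lam1 V (extC V φ' y)) (fun z _ => (sosWt_pos _ _ _ _).le) (x ⊔ y)
    nlinarith
section Summability

lemma summable_exp_abs_int {ε : ℝ} (hε : 0 < ε) :
    Summable (fun t : ℤ => Real.exp (-(ε * |(t : ℝ)|))) := by
  have hgeom := summable_geometric_of_lt_one (Real.exp_nonneg (-ε))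
    (Real.exp_lt_one_iff.2 (by linarith))
  apply Summable.of_nat_of_neg
  · refine hgeom.congr fun n => ?_
    rw [← Real.exp_nat_mul]
    congr 1
    push_cast
    rw [abs_of_nonneg (by positivity)]
    ring
  · refine hgeom.congr fun n => ?_
    rw [← Real.exp_nat_mul]
    congr 1
    push_cast
    rw [abs_neg, abs_of_nonneg (by positivity)]
    ring

lemma summable_exp_abs_int' {ε : ℝ} (hε : 0 < ε) (c : ℤ) :
    Summable (fun t : ℤ => Real.exp (-(ε * |(t : ℝ) - (c : ℝ)|))) := by
  refine ((Equiv.addRight c).summable_iff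
    (f := fun t : ℤ => Real.exp (-(ε * |(t : ℝ) - (c : ℝ)|)))).1
    ((summable_exp_abs_int hε).congr fun t => ?_)
  simp only [Function.comp, Equiv.coe_addRight]
  congr 2
  push_cast
  ring_nf

lemma summable_pi_prod_fin : ∀ (n : ℕ) (g : Fin n → ℤ → ℝ),
    (∀ i t, 0 ≤ g i t) → (∀ i, Summable (g i)) →
    Summable (fun x : Fin n → ℤ => ∏ i, g i (x i)) := by
  intro n
  induction n with
  | zero =>
      intro g h0 hs
      exact Summable.of_finite
  | succ n ih =>
      intro g h0 hs
      have base := (hs 0).mul_of_nonneg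
        (ih (fun i => g i.succ) (fun i t => h0 _ _) (fun i => hs _))
        (fun t => h0 0 t) (fun x => Finset.prod_nonneg fun i _ => h0 _ _)
      refine ((Fin.consEquiv (fun _ : Fin (n+1) => ℤ)).summable_iff
        (f := fun x : Fin (n+1) → ℤ => ∏ i, g i (x i))).1 (base.congr fun p => ?_)
      simp only [Function.comp, Fin.consEquiv_apply]
      rw [Fin.prod_univ_succ]
      simp

lemma summable_pi_prod (ι : Type) [Fintype ι] (g : ι → ℤ → ℝ)
    (h0 : ∀ i t, 0 ≤ g i t) (hs : ∀ i, Summable (g i)) :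
    Summable (fun x : ι → ℤ => ∏ i, g i (x i)) := by
  obtain e : ι ≃ Fin (Fintype.card ι) := Fintype.equivFin ι
  have h := summable_pi_prod_fin (Fintype.card ι) (fun i => g (e.symm i))
    (fun i t => h0 _ _) (fun i => hs _)
  have he : Summable ((fun x : ι → ℤ => ∏ i, g i (x i)) ∘
      (Equiv.arrowCongr e.symm (Equiv.refl ℤ))) := by
    refine h.congr fun x => ?_
    simp only [Function.comp, Equiv.arrowCongr_apply, Equiv.refl_apply]
    exact Fintype.prod_equiv e.symm _ _ fun i => by simp
  exact (Equiv.summable_iff _).1 he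

end Summability
section EnergyLB

variable {V : Finset Site} {φ : Site → ℤ}

lemma term_le_energy (ψ : Site → ℤ) {v d : Site} (hv : v ∈ V) (hd : d ∈ dirs) :
    (if v + d ∈ V then (1:ℝ)/2 else 1) * |(ψ v : ℝ) - (ψ (v + d) : ℝ)| ≤ sosEnergy V ψ := by
  rw [sosEnergy]
  calc (if v + d ∈ V then (1:ℝ)/2 else 1) * |(ψ v : ℝ) - (ψ (v + d) : ℝ)|
      ≤ ∑ d' ∈ dirs, (if v + d' ∈ V then (1:ℝ)/2 else 1) * |(ψ v : ℝ) - (ψ (v + d') : ℝ)| := by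
        refine Finset.single_le_sum (f := fun d' =>
          (if v + d' ∈ V then (1:ℝ)/2 else 1) * |(ψ v : ℝ) - (ψ (v + d') : ℝ)|)
          (fun d' _ => ?_) hd
        exact mul_nonneg (by split_ifs <;> norm_num) (abs_nonneg _)
    _ ≤ _ := by
        refine Finset.single_le_sum (f := fun v' => ∑ d' ∈ dirs,
          (if v' + d' ∈ V then (1:ℝ)/2 else 1) * |(ψ v' : ℝ) - (ψ (v' + d') : ℝ)|)
          (fun v' _ => Finset.sum_nonneg fun d' _ => ?_) hv
        exact mul_nonneg (by split_ifs <;> norm_num) (abs_nonneg _)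

lemma edge_le_energy (ψ : Site → ℤ) {u : Site} (h : u ∈ V ∨ u + (1, 0) ∈ V) :
    |(ψ u : ℝ) - (ψ (u + (1, 0)) : ℝ)| ≤ 2 * sosEnergy V ψ := by
  have h10 : ((1 : ℤ), (0 : ℤ)) ∈ dirs := by decide
  have hm10 : ((-1 : ℤ), (0 : ℤ)) ∈ dirs := by decide
  rcases h with h | h
  · have := term_le_energy (V := V) ψ h h10
    have habs := abs_nonneg ((ψ u : ℝ) - (ψ (u + (1, 0)) : ℝ))
    split_ifs at this <;> nlinarith
  · have key := term_le_energy (V := V) ψ h hm10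
    have huu : u + (1, 0) + (-1, 0) = u := by
      apply Prod.ext <;> simp
    rw [huu] at key
    rw [abs_sub_comm] at key
    have habs := abs_nonneg ((ψ u : ℝ) - (ψ (u + (1, 0)) : ℝ))
    split_ifs at key <;> nlinarith

lemma telescope (ψ : Site → ℤ) (v : Site) :
    ∀ n : ℕ, |(ψ v : ℝ) - (ψ (v + ((n : ℤ), 0)) : ℝ)| ≤
      ∑ k ∈ Finset.range n,
        |(ψ (v + ((k : ℤ), 0)) : ℝ) - (ψ (v + ((k : ℤ), 0) + (1, 0)) : ℝ)| := by
  intro n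
  induction n with
  | zero => simp [show ((0:ℤ), (0:ℤ)) = (0 : Site) from rfl]
  | succ n ih =>
      have hstep : v + ((n : ℤ), 0) + (1, 0) = v + (((n : ℕ) + 1 : ℤ), 0) := by
        apply Prod.ext <;> simp <;> push_cast <;> ring
      rw [Finset.sum_range_succ]
      calc |(ψ v : ℝ) - (ψ (v + (((n : ℕ) + 1 : ℤ), 0)) : ℝ)|
          ≤ |(ψ v : ℝ) - (ψ (v + ((n : ℤ), 0)) : ℝ)| +
            |(ψ (v + ((n : ℤ), 0)) : ℝ) - (ψ (v + (((n : ℕ) + 1 : ℤ), 0)) : ℝ)| := by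
            push_cast
            exact abs_sub_le _ _ _
        _ ≤ _ := by
            rw [hstep]
            push_cast
            push_cast at ih
            linarith

/-- The horizontal exit distance of `v` out of `V`. -/
def exitN (V : Finset Site) (v : Site) : ℕ := (V.sup fun w => (w.1 - v.1).toNat) + 1

lemma exit_not_mem (V : Finset Site) (v : Site) : v + ((exitN V v : ℤ), 0) ∉ V := by
  intro hmem
  have h1 : ((v + ((exitN V v : ℤ), 0)).1 - v.1).toNat ≤ V.sup fun w => (w.1 - v.1).toNat :=
    Finset.le_sup (f := fun w => (w.1 - v.1).toNat) hmem
  have h2 : (v + ((exitN V v : ℤ), 0)).1 - v.1 = (exitN V v : ℤ) := by simp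
  rw [h2] at h1
  simp only [Int.toNat_natCast, exitN] at h1
  omega

/-- Per-site deviation bound. -/
lemma site_dev_bound (ψ : Site → ℤ) (hψ : ∀ s, s ∉ V → ψ s = φ s) {v : Site} (hv : v ∈ V) :
    |(ψ v : ℝ) - (φ (v + ((exitN V v : ℤ), 0)) : ℝ)| ≤
      2 * (exitN V v : ℝ) * sosEnergy V ψ +
      ∑ k ∈ Finset.range (exitN V v),
        |(φ (v + ((k : ℤ), 0)) : ℝ) - (φ (v + ((k : ℤ), 0) + (1, 0)) : ℝ)| := by
  have hE := sosEnergy_nonneg V ψ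
  have hend : ψ (v + ((exitN V v : ℤ), 0)) = φ (v + ((exitN V v : ℤ), 0)) :=
    hψ _ (exit_not_mem V v)
  calc |(ψ v : ℝ) - (φ (v + ((exitN V v : ℤ), 0)) : ℝ)|
      = |(ψ v : ℝ) - (ψ (v + ((exitN V v : ℤ), 0)) : ℝ)| := by rw [hend]
    _ ≤ ∑ k ∈ Finset.range (exitN V v),
        |(ψ (v + ((k : ℤ), 0)) : ℝ) - (ψ (v + ((k : ℤ), 0) + (1, 0)) : ℝ)| :=
        telescope ψ v (exitN V v)
    _ ≤ ∑ k ∈ Finset.range (exitN V v), (2 * sosEnergy V ψ +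
        |(φ (v + ((k : ℤ), 0)) : ℝ) - (φ (v + ((k : ℤ), 0) + (1, 0)) : ℝ)|) := by
        refine Finset.sum_le_sum fun k _ => ?_
        by_cases hcase : v + ((k : ℤ), 0) ∈ V ∨ v + ((k : ℤ), 0) + (1, 0) ∈ V
        · have := edge_le_energy (V := V) ψ hcase
          have := abs_nonneg ((φ (v + ((k : ℤ), 0)) : ℝ) - (φ (v + ((k : ℤ), 0) + (1, 0)) : ℝ))
          linarith
        · push_neg at hcase
          rw [hψ _ hcase.1, hψ _ hcase.2]
          linarith
    _ = 2 * (exitN V v : ℝ) * sosEnergy V ψ +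
        ∑ k ∈ Finset.range (exitN V v),
          |(φ (v + ((k : ℤ), 0)) : ℝ) - (φ (v + ((k : ℤ), 0) + (1, 0)) : ℝ)| := by
        rw [Finset.sum_add_distrib, Finset.sum_const, Finset.card_range]
        rw [nsmul_eq_mul]; ring

/-- Global deviation bound: `Σ_v |ψ_v - c_v| ≤ K₁ E(ψ) + K₂`. -/
lemma energy_lower_bound (V : Finset Site) (φ : Site → ℤ) :
    ∃ (c : Site → ℤ) (K1 K2 : ℝ), 0 < K1 ∧
      ∀ ψ : Site → ℤ, (∀ s, s ∉ V → ψ s = φ s) →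
        ∑ v ∈ V, |(ψ v : ℝ) - (c v : ℝ)| ≤ K1 * sosEnergy V ψ + K2 := by
  refine ⟨fun v => φ (v + ((exitN V v : ℤ), 0)),
    (∑ v ∈ V, 2 * (exitN V v : ℝ)) + 1,
    ∑ v ∈ V, ∑ k ∈ Finset.range (exitN V v),
      |(φ (v + ((k : ℤ), 0)) : ℝ) - (φ (v + ((k : ℤ), 0) + (1, 0)) : ℝ)|,
    ?_, ?_⟩
  · have : (0:ℝ) ≤ ∑ v ∈ V, 2 * (exitN V v : ℝ) :=
      Finset.sum_nonneg fun v _ => by positivity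
    linarith
  · intro ψ hψ
    have hE := sosEnergy_nonneg V ψ
    calc ∑ v ∈ V, |(ψ v : ℝ) - (φ (v + ((exitN V v : ℤ), 0)) : ℝ)|
        ≤ ∑ v ∈ V, (2 * (exitN V v : ℝ) * sosEnergy V ψ +
          ∑ k ∈ Finset.range (exitN V v),
            |(φ (v + ((k : ℤ), 0)) : ℝ) - (φ (v + ((k : ℤ), 0) + (1, 0)) : ℝ)|) :=
          Finset.sum_le_sum fun v hv => site_dev_bound ψ hψ hv
      _ = (∑ v ∈ V, 2 * (exitN V v : ℝ)) * sosEnergy V ψ +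
          ∑ v ∈ V, ∑ k ∈ Finset.range (exitN V v),
            |(φ (v + ((k : ℤ), 0)) : ℝ) - (φ (v + ((k : ℤ), 0) + (1, 0)) : ℝ)| := by
          rw [Finset.sum_add_distrib, Finset.sum_mul]
      _ ≤ _ := by nlinarith

end EnergyLB
section MainSummability

variable {V : Finset Site}

set_option maxHeartbeats 2000000 in
lemma summable_indicator_wt (β : ℝ) (hβ : 0 < β) {lam : ℝ} (hlam : 0 ≤ lam)
    (a : Site → ℤ) (b : Site → WithTop ℤ) (φ : Site → ℤ) :
    Summable (fun x : {v : Site // v ∈ V} → ℤ =>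
      Set.indicator (Cset V a b) (fun x => sosWt β lam V (extC V φ x)) x) := by
  obtain ⟨c, K1, K2, hK1, hbound⟩ := energy_lower_bound V φ
  set ε : ℝ := β / K1 with hε
  have hεpos : 0 < ε := div_pos hβ hK1
  set A : ℝ := ∑ v ∈ V, (a v : ℝ) with hA
  set C : ℝ := Real.exp (β * K2 / K1 - lam * A) with hC
  have key : ∀ x : {v : Site // v ∈ V} → ℤ,
      Set.indicator (Cset V a b) (fun x => sosWt β lam V (extC V φ x)) x ≤
        C * ∏ v : {v : Site // v ∈ V}, Real.exp (-(ε * |(x v : ℝ) - (c v.1 : ℝ)|)) := by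
    intro x
    have hprod :
        ∏ v : {v : Site // v ∈ V}, Real.exp (-(ε * |(x v : ℝ) - (c v.1 : ℝ)|)) =
          Real.exp (-(ε * ∑ v : {v : Site // v ∈ V}, |(x v : ℝ) - (c v.1 : ℝ)|)) := by
      rw [← Real.exp_sum]
      congr 1
      rw [Finset.mul_sum]
      simp
    by_cases hx : x ∈ Cset V a b
    · rw [Set.indicator_of_mem hx, hprod, hC, sosWt, ← Real.exp_add]
      apply Real.exp_le_exp.2
      -- energy bound
      have hoff : ∀ s, s ∉ V → extC V φ x s = φ s := fun s hs => by simp [extC, hs]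
      have hEb := hbound (extC V φ x) hoff
      have hsum_eq : ∑ v ∈ V, |((extC V φ x) v : ℝ) - (c v : ℝ)| =
          ∑ v : {v : Site // v ∈ V}, |(x v : ℝ) - (c v.1 : ℝ)| := by
        rw [← Finset.sum_attach V (fun v => |((extC V φ x) v : ℝ) - (c v : ℝ)|)]
        refine Finset.sum_congr rfl fun v _ => ?_
        simp [extC, v.2]
      rw [hsum_eq] at hEb
      -- field bound
      have hFb : A ≤ sosField V (extC V φ x) := by
        rw [sosField, hA]
        refine Finset.sum_le_sum fun v hv => ?_
        have := (hx ⟨v, hv⟩).1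
        simp only [extC, dif_pos hv]
        exact_mod_cast this
      have hE := sosEnergy_nonneg V (extC V φ x)
      have h1 : ε * ∑ v : {v : Site // v ∈ V}, |(x v : ℝ) - (c v.1 : ℝ)| ≤
          β * sosEnergy V (extC V φ x) + β * K2 / K1 := by
        rw [hε, div_mul_eq_mul_div, div_le_iff₀ hK1]
        have hcanc : β * K2 / K1 * K1 = β * K2 := div_mul_cancel₀ _ hK1.ne'
        nlinarith [mul_le_mul_of_nonneg_left hEb hβ.le]
      have h2 : lam * A ≤ lam * sosField V (extC V φ x) :=
        mul_le_mul_of_nonneg_left hFb hlam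
      linarith
    · rw [Set.indicator_of_notMem hx]
      positivity
  have hsum : Summable (fun x : {v : Site // v ∈ V} → ℤ =>
      ∏ v : {v : Site // v ∈ V}, Real.exp (-(ε * |(x v : ℝ) - (c v.1 : ℝ)|))) :=
    summable_pi_prod {v : Site // v ∈ V} (fun v t => Real.exp (-(ε * |(t : ℝ) - (c v.1 : ℝ)|)))
      (fun i t => (Real.exp_pos _).le) (fun i => summable_exp_abs_int' hεpos (c i.1))
  exact Summable.of_nonneg_of_le
    (fun x => Set.indicator_nonneg (fun z _ => (sosWt_pos _ _ _ _).le) x) key (hsum.mul_left C)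

lemma gZ_pos (β : ℝ) (hβ : 0 < β) {lam : ℝ} (hlam : 0 ≤ lam)
    (a : Site → ℤ) (b : Site → WithTop ℤ) (φ : Site → ℤ)
    (hab : ∀ v ∈ V, (a v : WithTop ℤ) < b v) :
    0 < gZ β lam V a b φ := by
  rw [gZ_eq]
  refine (summable_indicator_wt β hβ hlam a b φ).tsum_pos
    (fun x => Set.indicator_nonneg (fun z _ => (sosWt_pos _ _ _ _).le) x)
    (fun v => a v.1) ?_
  have hmem : (fun v : {v : Site // v ∈ V} => a v.1) ∈ Cset V a b :=
    fun v => ⟨le_refl _, (hab v.1 v.2).le⟩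
  rw [Set.indicator_of_mem hmem]
  exact sosWt_pos _ _ _ _

lemma tsum_mul_tsum_le {I : Type*} {f1 f2 : I → ℝ} {R : ℝ}
    (hf1 : Summable f1) (hf2 : Summable f2)
    (h : ∀ S T : Finset I, (∑ x ∈ S, f1 x) * ∑ x ∈ T, f2 x ≤ R) :
    (∑' x, f1 x) * ∑' x, f2 x ≤ R := by
  have step1 : ∀ S : Finset I, (∑ x ∈ S, f1 x) * ∑' x, f2 x ≤ R := by
    intro S
    refine le_of_tendsto (hf2.hasSum.const_mul (∑ x ∈ S, f1 x)) ?_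
    exact Filter.Eventually.of_forall fun T => h S T
  refine le_of_tendsto (hf1.hasSum.mul_const (∑' x, f2 x)) ?_
  exact Filter.Eventually.of_forall fun S => step1 S

end MainSummability
open scoped FinsetFamily

/-- Lemma 2.3 of the paper. For every finite `V`, `β > 0`, boundary
conditions `φ ≤ φ'` on `∂_o V`, and floor/ceiling pairs with `a ≤ a'` and `b ≤ b'` on
`V`, the map `λ ↦ Z^{a,b,φ}_{λ,V} / Z^{a',b',φ'}_{λ,V}` is nondecreasing in `λ ≥ 0`
(i.e., its derivative in `λ` is nonnegative). -/
theorem statement6 (β : ℝ) (hβ : 0 < β) (V : Finset Site)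
    (a a' : Site → ℤ) (b b' : Site → WithTop ℤ)
    (hab : ∀ v ∈ V, (a v : WithTop ℤ) < b v)
    (hab' : ∀ v ∈ V, (a' v : WithTop ℤ) < b' v)
    (ha : ∀ v ∈ V, a v ≤ a' v) (hb : ∀ v ∈ V, b v ≤ b' v)
    (φ φ' : Site → ℤ)
    (hφ : ∀ w, w ∉ V → (∃ d ∈ dirs, w + d ∈ V) → φ w ≤ φ' w) :
    MonotoneOn (fun lam : ℝ => gZ β lam V a b φ / gZ β lam V a' b' φ')
      (Set.Ici (0 : ℝ)) := by
  letI : DecidableEq ({v : Site // v ∈ V} → ℤ) := Classical.decEq _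
  intro lam1 hl1 lam2 hl2 h12
  simp only [Set.mem_Ici] at hl1 hl2
  have hD1 : 0 < gZ β lam1 V a' b' φ' := gZ_pos β hβ hl1 a' b' φ' hab'
  have hD2 : 0 < gZ β lam2 V a' b' φ' := gZ_pos β hβ hl2 a' b' φ' hab'
  simp only
  rw [div_le_div_iff₀ hD1 hD2]
  set f1 := fun x : {v : Site // v ∈ V} → ℤ =>
    Set.indicator (Cset V a b) (fun x => sosWt β lam1 V (extC V φ x)) x with hf1
  set f2 := fun y : {v : Site // v ∈ V} → ℤ =>
    Set.indicator (Cset V a' b') (fun y => sosWt β lam2 V (extC V φ' y)) y with hf2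
  set f3 := fun x : {v : Site // v ∈ V} → ℤ =>
    Set.indicator (Cset V a b) (fun x => sosWt β lam2 V (extC V φ x)) x with hf3
  set f4 := fun y : {v : Site // v ∈ V} → ℤ =>
    Set.indicator (Cset V a' b') (fun y => sosWt β lam1 V (extC V φ' y)) y with hf4
  have hnn1 : (0 : ({v : Site // v ∈ V} → ℤ) → ℝ) ≤ f1 :=
    Pi.le_def.2 fun x => Set.indicator_nonneg (fun z _ => (sosWt_pos _ _ _ _).le) x
  have hnn2 : (0 : ({v : Site // v ∈ V} → ℤ) → ℝ) ≤ f2 :=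
    Pi.le_def.2 fun x => Set.indicator_nonneg (fun z _ => (sosWt_pos _ _ _ _).le) x
  have hnn3 : (0 : ({v : Site // v ∈ V} → ℤ) → ℝ) ≤ f3 :=
    Pi.le_def.2 fun x => Set.indicator_nonneg (fun z _ => (sosWt_pos _ _ _ _).le) x
  have hnn4 : (0 : ({v : Site // v ∈ V} → ℤ) → ℝ) ≤ f4 :=
    Pi.le_def.2 fun x => Set.indicator_nonneg (fun z _ => (sosWt_pos _ _ _ _).le) x
  have hs1 : Summable f1 := summable_indicator_wt β hβ hl1 a b φ
  have hs2 : Summable f2 := summable_indicator_wt β hβ hl2 a' b' φ'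
  have hs3 : Summable f3 := summable_indicator_wt β hβ hl2 a b φ
  have hs4 : Summable f4 := summable_indicator_wt β hβ hl1 a' b' φ'
  have hAD : ∀ x y, f1 x * f2 y ≤ f3 (x ⊓ y) * f4 (x ⊔ y) :=
    fun x y => ADpointwise β hβ hl1 h12 ha hb hφ x y
  have key : (∑' x, f1 x) * (∑' y, f2 y) ≤ (∑' x, f3 x) * (∑' y, f4 y) := by
    refine tsum_mul_tsum_le hs1 hs2 fun S T => ?_
    calc (∑ x ∈ S, f1 x) * ∑ y ∈ T, f2 y
        ≤ (∑ x ∈ S ⊼ T, f3 x) * ∑ y ∈ S ⊻ T, f4 y :=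
          four_functions_theorem f1 f2 f3 f4 hnn1 hnn2 hnn3 hnn4 hAD S T
      _ ≤ (∑' x, f3 x) * (∑' y, f4 y) := by
          refine mul_le_mul (hs3.sum_le_tsum _ (fun x _ => hnn3 x))
            (hs4.sum_le_tsum _ (fun y _ => hnn4 y))
            (Finset.sum_nonneg fun y _ => hnn4 y) ?_
          exact tsum_nonneg fun x => hnn3 x
  rw [gZ_eq β lam1 V a b φ, gZ_eq β lam2 V a' b' φ', gZ_eq β lam2 V a b φ,
    gZ_eq β lam1 V a' b' φ']
  exact key
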